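/- Let P be a finite poset on {p_1,...,p_n} and let G(P) be the bipartite graph on {x_1,...,x_n} ∪ {y_1,...,y_n} with edges {x_i,y_j} exactly when p_i ≤ p_j. Then G(P) is a complete C-M bipartite graph (i.e., there is a permutation σ of [n] such that {x_{σ(i)}, y_{σ(j)}} ∈ E(G(P)) iff i ≤ j) if and only if P is a chain (totally ordered). -/

import Mathlib

/-- Type synonym for `Fin n` used to carry an alternative linear order. -/
def Stmt1Aux (n : ℕ) : Type := Fin n

instance (n : ℕ) : Fintype (Stmt1Aux n) := Fin.fintype n

theorem Stmt1Aux.card (n : ℕ) : Fintype.card (Stmt1Aux n) = n := Fintype.card_fin n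

/-- `G(P)` is a complete C-M bipartite graph iff the poset `P` is a chain. -/
theorem stmt1 (n : ℕ) (le : Fin n → Fin n → Prop) [IsPartialOrder (Fin n) le] :
    (∃ σ : Equiv.Perm (Fin n), ∀ i j : Fin n, le (σ i) (σ j) ↔ i ≤ j) ↔
      (∀ i j : Fin n, le i j ∨ le j i) := by
  constructor
  · rintro ⟨σ, h⟩ i j
    rcases le_total (σ.symm i) (σ.symm j) with hh | hh
    · left
      have := (h _ _).2 hh
      simpa using this
    · right
      have := (h _ _).2 hh
      simpa using this
  · intro htot
    classical
    let le' : Stmt1Aux n → Stmt1Aux n → Prop := le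
    letI : LinearOrder (Stmt1Aux n) :=
      { le := le'
        lt := fun a b => le' a b ∧ ¬ le' b a
        le_refl := fun a => Std.Refl.refl (r := le) a
        le_trans := fun a b c hab hbc => IsTrans.trans (r := le) a b c hab hbc
        le_antisymm := fun a b hab hba => Std.Antisymm.antisymm (r := le) a b hab hba
        le_total := htot
        toDecidableLE := fun a b => Classical.dec _
        lt_iff_le_not_ge := fun _ _ => Iff.rfl }
    let e := monoEquivOfFin (Stmt1Aux n) (Stmt1Aux.card n)
    refine ⟨(show Fin n ≃ Fin n from e.toEquiv), fun i j => ?_⟩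
    exact e.le_iff_le
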